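/- arXiv:1805.01888 — 2 statements merged into one kernel-verified Lean document; each statement's English description precedes it below -/
import Mathlib

section
/- Let R be a commutative ring, let n ≥ 0 and d ≥ 1 be integers, and let A be an n×n matrix over R. Let B be the dn×dn matrix, with rows and columns indexed by pairs (i, j) with 0 ≤ i ≤ d−1 and 1 ≤ j ≤ n, defined in n×n blocks as follows: the block of B in block-row i and block-column i−1 is the identity matrix I_n for each 1 ≤ i ≤ d−1, the block of B in block-row 0 and block-column d−1 is A, and all other blocks are zero. Then the identity det(X·I_{dn} − B) = det(X^d·I_n − A) holds in the polynomial ring R[X]. -/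
open Polynomial

/-- **Characteristic polynomial of a twisted cyclic shift block matrix.**
Let `A` be an `n × n` matrix over a commutative ring `R` and `d ≥ 1`.  Let `B`
be the `dn × dn` block matrix whose block in block-row `i` and block-column
`i - 1` is the identity `I_n` for `1 ≤ i ≤ d - 1`, whose block in block-row `0`
and block-column `d - 1` is `A`, and whose other blocks are zero.  Then
`det (X • I_{dn} - B) = det (X^d • I_n - A)` in `R[X]`. -/
theorem charpoly_twisted_cyclic_shift_block_matrix
    (R : Type*) [CommRing R] (n d : ℕ) (hd : 1 ≤ d)
    (A : Matrix (Fin n) (Fin n) R)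
    (B : Matrix (Fin d × Fin n) (Fin d × Fin n) R)
    (hB : ∀ (i i' : Fin d) (j j' : Fin n),
      B (i, j) (i', j') =
        if (i : ℕ) = (i' : ℕ) + 1 then (if j = j' then (1 : R) else 0)
        else if (i : ℕ) = 0 ∧ (i' : ℕ) = d - 1 then A j j' else 0) :
    ((X : R[X]) • (1 : Matrix (Fin d × Fin n) (Fin d × Fin n) R[X]) - B.map C).det =
      (((X : R[X]) ^ d) • (1 : Matrix (Fin n) (Fin n) R[X]) - A.map C).det := by
  classical
  obtain ⟨m, rfl⟩ : ∃ m, d = m + 1 := ⟨d - 1, (Nat.succ_pred_eq_of_pos hd).symm⟩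
  simp only [Nat.add_sub_cancel] at hB
  set M : Matrix (Fin (m+1) × Fin n) (Fin (m+1) × Fin n) R[X] :=
    (X : R[X]) • 1 - B.map C with hM
  set P : Matrix (Fin (m+1) × Fin n) (Fin (m+1) × Fin n) R[X] :=
    Matrix.of (fun p q => if p.1 ≤ q.1 ∧ p.2 = q.2 then (X:R[X]) ^ ((q.1:ℕ) - (p.1:ℕ)) else 0)
    with hP
  set Q : Matrix (Fin (m+1) × Fin n) (Fin (m+1) × Fin n) R[X] :=
    Matrix.of (fun p q => if (p.1:ℕ) = 0 ∧ p.2 = q.2 then (X:R[X]) ^ (q.1:ℕ)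
      else if p = q then 1 else 0) with hQ
  set T : Matrix (Fin (m+1) × Fin n) (Fin (m+1) × Fin n) R[X] :=
    Matrix.of (fun p q =>
      if (p.1:ℕ) = 0 then
        (if (q.1:ℕ) = m then (((X : R[X]) ^ (m+1)) • (1 : Matrix (Fin n) (Fin n) R[X]) - A.map C) p.2 q.2 else 0)
      else if (q.1:ℕ) + 1 = (p.1:ℕ) then (if p.2 = q.2 then (-1:R[X]) else 0) else 0) with hT
  -- entries of `M`
  have hMent : ∀ (i i' : Fin (m+1)) (j j' : Fin n), M (i,j) (i',j') =
      (if i = i' ∧ j = j' then (X:R[X]) else 0) - C (B (i,j) (i',j')) := by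
    intro i i' j j'
    simp [hM, Matrix.one_apply, Prod.ext_iff, ite_and, apply_ite (fun r : R[X] => X * r)]
  -- entries of `M * P`
  have hMP : ∀ (i k : Fin (m+1)) (j l : Fin n), (M * P) (i,j) (k,l) =
      if (i:ℕ) = 0 then
        ((if j = l then (X:R[X])^((k:ℕ)+1) else 0) - (if (k:ℕ) = m then C (A j l) else 0))
      else if (k:ℕ) + 1 = (i:ℕ) then (if j = l then (-1:R[X]) else 0) else 0 := by
    intro i k j l
    rw [Matrix.mul_apply]
    have hexp : ∀ p' : Fin (m+1) × Fin n, M (i,j) p' * P p' (k,l) =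
        (if (i,j) = p' then (X:R[X]) else 0) * P p' (k,l) - C (B (i,j) p') * P p' (k,l) := by
      rintro ⟨i', j'⟩; rw [hMent, sub_mul]; simp [Prod.ext_iff]
    simp only [hexp]
    rw [Finset.sum_sub_distrib]
    have h1 : (∑ p' : Fin (m+1) × Fin n,
        (if (i,j) = p' then (X:R[X]) else 0) * P p' (k,l)) = X * P (i,j) (k,l) := by
      simp [ite_mul, Finset.sum_ite_eq]
    rw [h1]
    by_cases hi : (i:ℕ) = 0
    · have h2 : (∑ p' : Fin (m+1) × Fin n, C (B (i,j) p') * P p' (k,l)) =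
          if (k:ℕ) = m then C (A j l) else 0 := by
        rw [Finset.sum_eq_single (Fin.last m, l)]
        · rw [hB, hP]
          by_cases hk : (k:ℕ) = m
          · have hkl : Fin.last m ≤ k := by rw [Fin.le_def]; simp [hk]
            simp [hi, hk, hkl, Fin.val_last]
          · have hkl : ¬ (Fin.last m ≤ k) := by rw [Fin.le_def]; simp [Fin.val_last]; omega
            simp [hi, hk, hkl]
        · rintro ⟨i', j'⟩ - hne
          rw [hB, hP]
          by_cases hi' : (i':ℕ) = m
          · have : j' ≠ l := fun h => hne (by simp [Prod.ext_iff, Fin.ext_iff, hi', h])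
            simp [hi, this]
          · simp [hi, hi', show ¬ ((0:ℕ) = (i':ℕ) + 1) from by omega]
        · intro h; exact absurd (Finset.mem_univ _) h
      rw [h2, if_pos hi]
      have h3 : X * P (i,j) (k,l) = if j = l then (X:R[X])^((k:ℕ)+1) else 0 := by
        have hik : i ≤ k := by rw [Fin.le_def, hi]; exact Nat.zero_le _
        simp [hP, hik, hi, mul_ite, ← pow_succ']
      rw [h3]
    · obtain ⟨s, hs, hsm⟩ : ∃ s : ℕ, (i:ℕ) = s + 1 ∧ s < m + 1 := ⟨(i:ℕ) - 1, by omega, by omega⟩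
      have h2 : (∑ p' : Fin (m+1) × Fin n, C (B (i,j) p') * P p' (k,l)) =
          P (⟨s, hsm⟩, j) (k,l) := by
        rw [Finset.sum_eq_single ((⟨s, hsm⟩ : Fin (m+1)), j)]
        · rw [hB]; simp [hs]
        · rintro ⟨i', j'⟩ - hne
          rw [hB, hP]
          by_cases hi' : (i':ℕ) = s
          · have : j' ≠ j := fun h => hne (by simp [Prod.ext_iff, Fin.ext_iff, hi', h])
            simp [hs, hi', show (j = j') ↔ False from ⟨fun h => this h.symm, False.elim⟩]
          · simp [hs, hi, show ¬ ((s:ℕ) + 1 = (i':ℕ) + 1) from by omega,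
              show ¬ ((i:ℕ) = 0) from by omega, show ¬ (s = (i':ℕ)) from by omega]
        · intro h; exact absurd (Finset.mem_univ _) h
      rw [h2, if_neg hi]
      simp only [hP, Matrix.of_apply, Fin.le_def, hs]
      by_cases hjl : j = l
      · simp only [hjl, and_true, eq_self_iff_true]
        rcases lt_trichotomy (k:ℕ) s with h | h | h
        · rw [if_neg (by omega), if_neg (by omega), if_neg (by omega), sub_zero, mul_zero]
        · rw [if_neg (by omega), if_pos (by omega), if_pos (by omega)]
          simp [show (k:ℕ) - s = 0 from by omega, h]
        · rw [if_pos (by omega), if_pos (by omega), if_neg (by omega)]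
          rw [show (k:ℕ) - s = ((k:ℕ) - (s+1)) + 1 from by omega]
          ring
      · simp [hjl]
  -- `Q * (M * P) = T`
  have hQT : Q * (M * P) = T := by
    ext ⟨i, j⟩ ⟨k, l⟩ : 2
    rw [Matrix.mul_apply]
    by_cases hi : (i:ℕ) = 0
    · have hQrow : ∀ p' : Fin (m+1) × Fin n, Q (i,j) p' =
          if j = p'.2 then (X:R[X]) ^ (p'.1:ℕ) else 0 := by
        rintro ⟨i', j'⟩
        by_cases hj : j = j'
        · simp [hQ, hi, hj, -Fin.val_eq_zero_iff]
        · simp [hQ, hi, hj, Prod.ext_iff, -Fin.val_eq_zero_iff]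
      simp only [hQrow]
      by_cases hk : (k:ℕ) = m
      · rw [Finset.sum_eq_single ((0 : Fin (m+1)), j)]
        · rw [hMP]
          simp only [Fin.val_zero, pow_zero, one_mul, if_pos rfl, if_pos hk, if_pos (rfl : j = j)]
          rw [hT]
          simp [hi, hk, Matrix.smul_apply, Matrix.one_apply, smul_ite, -Fin.val_eq_zero_iff]
        · rintro ⟨i', j'⟩ - hne
          rw [hMP]
          by_cases hj : j = j'
          · have hi' : ¬ ((i':ℕ) = 0) := by
              intro h; exact hne (by simp [Prod.ext_iff, Fin.ext_iff, h, hj.symm])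
            simp [hi', hj, show ¬ ((k:ℕ) + 1 = (i':ℕ)) from by omega]
          · simp [hj]
        · intro h; exact absurd (Finset.mem_univ _) h
      · have hsplit : ∀ p' : Fin (m+1) × Fin n,
            (if j = p'.2 then (X:R[X]) ^ (p'.1:ℕ) else 0) * (M * P) p' (k,l) =
            (if p' = ((0 : Fin (m+1)), j) then (if j = l then (X:R[X])^((k:ℕ)+1) else 0) else 0)
            + (if p' = ((⟨(k:ℕ)+1, by omega⟩ : Fin (m+1)), j) then
                (X:R[X])^((k:ℕ)+1) * (if j = l then (-1:R[X]) else 0) else 0) := by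
          rintro ⟨i', j'⟩
          rw [hMP]
          by_cases hj : j = j'
          · subst hj
            by_cases h0 : (i':ℕ) = 0
            · have : i' = 0 := by simp [Fin.ext_iff, h0]
              subst this
              simp [hk, Prod.ext_iff, Fin.ext_iff, -Fin.val_eq_zero_iff]
            · by_cases hki : (k:ℕ) + 1 = (i':ℕ)
              · have e2 : i' = (⟨(k:ℕ)+1, by omega⟩ : Fin (m+1)) := by
                  apply Fin.ext; exact hki.symm
                simp [e2, Prod.ext_iff, Fin.ext_iff, mul_ite, -Fin.val_eq_zero_iff]
              · simp [h0, hki, Prod.ext_iff, Fin.ext_iff, show ¬ ((i':ℕ) = (k:ℕ)+1) from by omega]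
          · simp [hj, Prod.ext_iff, show (j = j') ↔ False from ⟨hj, False.elim⟩,
              show (j' = j) ↔ False from ⟨fun h => hj h.symm, False.elim⟩]
        simp only [hsplit]
        rw [Finset.sum_add_distrib, Finset.sum_ite_eq', Finset.sum_ite_eq', hT]
        by_cases hjl : j = l <;> simp [hi, hk, hjl]
    · have hQrow : ∀ p' : Fin (m+1) × Fin n, Q (i,j) p' =
          if (i,j) = p' then (1:R[X]) else 0 := by
        rintro ⟨i', j'⟩
        simp [hQ, hi, Prod.ext_iff, -Fin.val_eq_zero_iff]
      simp only [hQrow, ite_mul, one_mul, zero_mul]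
      rw [Finset.sum_ite_eq, hMP, hT]
      simp [hi, -Fin.val_eq_zero_iff]
  -- `det P = 1`
  have hdetP : P.det = 1 := by
    have hbt : P.BlockTriangular Prod.fst := by
      rintro ⟨i, j⟩ ⟨k, l⟩ h
      simp only [hP, Matrix.of_apply]
      rw [if_neg]
      rintro ⟨h1, -⟩
      exact absurd h1 (not_le.mpr h)
    rw [hbt.det_fintype]
    apply Finset.prod_eq_one
    intro c _
    have hblock : P.toSquareBlock Prod.fst c = 1 := by
      ext a b : 2
      obtain ⟨⟨a1, a2⟩, ha⟩ := a
      obtain ⟨⟨b1, b2⟩, hb⟩ := b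
      have hab : a1 = b1 := by rw [show a1 = c from ha, show b1 = c from hb]
      subst hab
      by_cases h2 : a2 = b2 <;>
        simp [Matrix.toSquareBlock_def, hP, Matrix.one_apply, Subtype.ext_iff,
          Prod.ext_iff, h2]
    rw [hblock, Matrix.det_one]
  -- `det Q = 1`
  have hdetQ : Q.det = 1 := by
    have hbt : Q.BlockTriangular Prod.fst := by
      rintro ⟨i, j⟩ ⟨k, l⟩ h
      simp only [hQ, Matrix.of_apply]
      rw [if_neg, if_neg]
      · intro h'
        rw [h'] at h
        exact lt_irrefl _ h
      · rintro ⟨h1, -⟩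
        rw [Fin.lt_def, h1] at h
        exact Nat.not_lt_zero _ h
    rw [hbt.det_fintype]
    apply Finset.prod_eq_one
    intro c _
    have hblock : Q.toSquareBlock Prod.fst c = 1 := by
      ext a b : 2
      obtain ⟨⟨a1, a2⟩, ha⟩ := a
      obtain ⟨⟨b1, b2⟩, hb⟩ := b
      have hab : a1 = b1 := by rw [show a1 = c from ha, show b1 = c from hb]
      subst hab
      by_cases hc : (a1:ℕ) = 0 <;> by_cases h2 : a2 = b2 <;>
        simp [Matrix.toSquareBlock_def, hQ, Matrix.one_apply, Subtype.ext_iff,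
          Prod.ext_iff, h2, hc, -Fin.val_eq_zero_iff]
    rw [hblock, Matrix.det_one]
  -- `det T` is the right-hand side
  have hdetT : T.det =
      (((X : R[X]) ^ (m+1)) • (1 : Matrix (Fin n) (Fin n) R[X]) - A.map C).det := by
    set G : Matrix (Fin n) (Fin n) R[X] :=
      ((X : R[X]) ^ (m+1)) • (1 : Matrix (Fin n) (Fin n) R[X]) - A.map C with hG
    set D : Fin (m+1) → Matrix (Fin n) (Fin n) R[X] :=
      fun i => if (i:ℕ) = 0 then G else (-1) with hD
    set e : Equiv.Perm (Fin (m+1)) := ((finRotate (m+1)).symm : Equiv.Perm (Fin (m+1))) with he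
    set π : Equiv.Perm (Fin (m+1) × Fin n) :=
      Equiv.prodCongrLeft (fun _ : Fin n => e) with hπ
    have hev : ∀ k : Fin (m+1), (e k : ℕ) = if (k:ℕ) = 0 then m else (k:ℕ) - 1 := by
      intro k
      have hk : (k:ℕ) < m + 1 := k.isLt
      set y : Fin (m+1) := ⟨if (k:ℕ) = 0 then m else (k:ℕ) - 1, by split <;> omega⟩ with hy
      have : finRotate (m+1) y = k := by
        rw [finRotate_succ_apply]
        apply Fin.ext
        rw [Fin.val_add_one]
        by_cases h0 : (k:ℕ) = 0
        · rw [if_pos]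
          · exact h0.symm
          · apply Fin.ext; simp [hy, h0]
        · rw [if_neg]
          · simp only [hy]
            rw [if_neg h0]
            omega
          · intro hlast
            have hym : (if (k:ℕ) = 0 then m else (k:ℕ) - 1) = m := by
              simpa [hy, -Fin.val_eq_zero_iff] using congrArg Fin.val hlast
            rw [if_neg h0] at hym
            omega
      have : e k = y := by rw [he, Equiv.symm_apply_eq, this]
      rw [this]
    have hsub : T.submatrix id ⇑π = (Matrix.blockDiagonal D).submatrix
        (Equiv.prodComm (Fin (m+1)) (Fin n)) (Equiv.prodComm (Fin (m+1)) (Fin n)) := by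
      ext ⟨i, j⟩ ⟨k, l⟩ : 2
      have hπa : π (k, l) = (e k, l) := rfl
      simp only [Matrix.submatrix_apply, id_eq, hπa, Equiv.prodComm_apply, Prod.swap_prod_mk,
        Matrix.blockDiagonal_apply]
      rw [hT]
      simp only [Matrix.of_apply]
      by_cases hk0 : (k:ℕ) = 0
      · have hek : (e k : ℕ) = m := by rw [hev, if_pos hk0]
        by_cases hi0 : (i:ℕ) = 0
        · have : i = k := by apply Fin.ext; omega
          subst this
          simp [hi0, hek, hD, -Fin.val_eq_zero_iff]
        · have : i ≠ k := fun h => hi0 (h ▸ hk0)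
          simp [hi0, hek, this, show ¬ ((m:ℕ) + 1 = (i:ℕ)) from by have := i.isLt; omega]
      · have hek : (e k : ℕ) = (k:ℕ) - 1 := by rw [hev, if_neg hk0]
        by_cases hi0 : (i:ℕ) = 0
        · have : i ≠ k := fun h => hk0 (h ▸ hi0)
          simp [hi0, this, show ¬ ((e k : ℕ) = m) from by rw [hek]; have := k.isLt; omega]
        · by_cases hik : i = k
          · subst hik
            simp [hi0, hD, show ((e i : ℕ) + 1 = (i:ℕ)) from by rw [hek]; omega,
              Matrix.neg_apply, Matrix.one_apply, -Fin.val_eq_zero_iff]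
            split <;> simp
          · have : ¬ ((e k : ℕ) + 1 = (i:ℕ)) := by
              rw [hek]
              intro h
              exact hik (Fin.ext (by omega))
            simp [hi0, this, hik]
    have h1 : (T.submatrix id ⇑π).det = (Equiv.Perm.sign π : ℤ) * T.det :=
      Matrix.det_permute' π T
    have h2 : ((Matrix.blockDiagonal D).submatrix
        (Equiv.prodComm (Fin (m+1)) (Fin n)) (Equiv.prodComm (Fin (m+1)) (Fin n))).det
        = (Matrix.blockDiagonal D).det :=
      Matrix.det_submatrix_equiv_self _ _
    have h3 : (Matrix.blockDiagonal D).det = ∏ i : Fin (m+1), (D i).det :=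
      Matrix.det_blockDiagonal D
    have h4 : ∏ i : Fin (m+1), (D i).det = G.det * ((-1 : R[X]) ^ (n*m)) := by
      rw [Fin.prod_univ_succ]
      have hD0 : D 0 = G := by rw [hD]; simp
      have hDs : ∀ i : Fin m, D i.succ = -1 := by
        intro i; rw [hD]; simp [Fin.val_succ]
      have hdneg : (-1 : Matrix (Fin n) (Fin n) R[X]).det = (-1 : R[X]) ^ n := by
        have := Matrix.det_neg (1 : Matrix (Fin n) (Fin n) R[X])
        simpa using this
      simp only [hD0, hDs, hdneg]
      rw [Finset.prod_const, Finset.card_univ, Fintype.card_fin, ← pow_mul]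
    have hsign : Equiv.Perm.sign π = (-1 : ℤˣ) ^ (n*m) := by
      rw [hπ, Equiv.Perm.sign_prodCongrLeft]
      simp only [he, Equiv.Perm.sign_symm, sign_finRotate, Nat.add_sub_cancel]
      rw [Finset.prod_const, Finset.card_univ, Fintype.card_fin, ← pow_mul, Nat.mul_comm]
    have hcast : ((Equiv.Perm.sign π : ℤ) : R[X]) = (-1 : R[X]) ^ (n*m) := by
      rw [hsign]; push_cast; ring
    have key : ((-1 : R[X]) ^ (n*m)) * T.det = G.det * ((-1 : R[X]) ^ (n*m)) := by
      have key0 : ((Equiv.Perm.sign π : ℤ) : R[X]) * T.det = G.det * ((-1 : R[X]) ^ (n*m)) := by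
        rw [← h1, hsub, h2, h3, h4]
      rw [hcast] at key0
      exact key0
    have hsq : ((-1 : R[X]) ^ (n*m)) * ((-1 : R[X]) ^ (n*m)) = 1 := by
      rw [← pow_add]
      exact Even.neg_one_pow ⟨n*m, rfl⟩
    calc T.det = (((-1 : R[X]) ^ (n*m)) * ((-1 : R[X]) ^ (n*m))) * T.det := by rw [hsq, one_mul]
      _ = ((-1 : R[X]) ^ (n*m)) * (((-1 : R[X]) ^ (n*m)) * T.det) := by ring
      _ = ((-1 : R[X]) ^ (n*m)) * (G.det * ((-1 : R[X]) ^ (n*m))) := by rw [key]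
      _ = G.det * (((-1 : R[X]) ^ (n*m)) * ((-1 : R[X]) ^ (n*m))) := by ring
      _ = G.det := by rw [hsq, mul_one]
  calc M.det = Q.det * M.det * P.det := by rw [hdetP, hdetQ]; ring
    _ = (Q * (M * P)).det := by rw [Matrix.det_mul, Matrix.det_mul, mul_assoc]
    _ = T.det := by rw [hQT]
    _ = _ := hdetT
end

section
/- Let G be a finite abelian group and let H, P, N be subgroups of G with N contained in P. For a subgroup S of G write Ann(S) for the subgroup of Hom(G, ℂˣ) consisting of characters trivial on S. Then Ann(H·N) contains Ann(H·P), and the quotient group Ann(H·N)/Ann(H·P) is isomorphic to the character group Hom(P/((H ∩ P)·N), ℂˣ); in particular its order equals the index [P : (H ∩ P)·N]. -/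
/-- Duality for finite abelian groups: the character group `Q →* ℂˣ` of a finite
abelian group `Q` is (noncanonically) isomorphic to `Q`; in particular they have
the same cardinality. -/
lemma aux_char_equiv (Q : Type*) [CommGroup Q] [Finite Q] :
    Nonempty ((Q →* ℂˣ) ≃* Q) := by
  haveI : NeZero ((Monoid.exponent Q : ℂ)) :=
    ⟨Nat.cast_ne_zero.mpr Monoid.exponent_ne_zero_of_finite⟩
  exact CommGroup.monoidHom_mulEquiv_of_hasEnoughRootsOfUnity Q ℂ

lemma aux_char_finite (Q : Type*) [CommGroup Q] [Finite Q] : Finite (Q →* ℂˣ) := by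
  obtain ⟨e⟩ := aux_char_equiv Q
  exact Finite.of_equiv Q e.symm.toEquiv

lemma aux_char_card (Q : Type*) [CommGroup Q] [Finite Q] :
    Nat.card (Q →* ℂˣ) = Nat.card Q := by
  obtain ⟨e⟩ := aux_char_equiv Q
  exact Nat.card_congr e.toEquiv

/-- The annihilator of a subgroup `S ≤ G` inside the character group of `G` is in
bijection with the character group of `G ⧸ S`. -/
def auxAnnEquiv {G : Type*} [CommGroup G] (S : Subgroup G) (A : Subgroup (G →* ℂˣ))
    (hA : ∀ χ : G →* ℂˣ, χ ∈ A ↔ ∀ s ∈ S, χ s = 1) :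
    ((G ⧸ S) →* ℂˣ) ≃ ↥A where
  toFun ψ := ⟨ψ.comp (QuotientGroup.mk' S), (hA _).mpr fun s hs => by
    have h1 : (QuotientGroup.mk' S) s = 1 := (QuotientGroup.eq_one_iff s).mpr hs
    simp [MonoidHom.comp_apply, h1]⟩
  invFun χ := QuotientGroup.lift S (χ : G →* ℂˣ) (fun s hs => (hA _).mp χ.2 s hs)
  left_inv ψ := MonoidHom.ext fun x => QuotientGroup.induction_on x fun g => rfl
  right_inv χ := Subtype.ext (MonoidHom.ext fun g => rfl)

/-- **Quotients of annihilators in character groups.**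
Let `G` be a finite abelian group with subgroups `H`, `P`, `N` where `N ≤ P`.
For a subgroup `S ≤ G`, write `Ann S` for the subgroup of `Hom(G, ℂˣ)` of
characters trivial on `S`.  Then `Ann (H·P) ≤ Ann (H·N)`, the quotient
`Ann (H·N) / Ann (H·P)` is isomorphic to the character group of
`P / ((H ∩ P)·N)`, and in particular its order equals the index
`[P : (H ∩ P)·N]`. -/
theorem quotient_of_annihilators_iso_character_group
    (G : Type*) [CommGroup G] [Fintype G]
    (H P N : Subgroup G) (hNP : N ≤ P)
    (AnnHN AnnHP : Subgroup (G →* ℂˣ))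
    (hAnnHN : (AnnHN : Set (G →* ℂˣ)) = {χ : G →* ℂˣ | ∀ s ∈ H ⊔ N, χ s = 1})
    (hAnnHP : (AnnHP : Set (G →* ℂˣ)) = {χ : G →* ℂˣ | ∀ s ∈ H ⊔ P, χ s = 1}) :
    AnnHP ≤ AnnHN ∧
    Nonempty ((↥AnnHN ⧸ AnnHP.subgroupOf AnnHN) ≃*
      ((↥P ⧸ ((H ⊓ P) ⊔ N).subgroupOf P) →* ℂˣ)) ∧
    Nat.card (↥AnnHN ⧸ AnnHP.subgroupOf AnnHN) =
      (((H ⊓ P) ⊔ N).subgroupOf P).index := by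
  classical
  set Q : Subgroup G := (H ⊓ P) ⊔ N with hQdef
  have hmemN : ∀ χ : G →* ℂˣ, χ ∈ AnnHN ↔ ∀ s ∈ H ⊔ N, χ s = 1 := fun χ => by
    rw [← SetLike.mem_coe, hAnnHN]; rfl
  have hmemP : ∀ χ : G →* ℂˣ, χ ∈ AnnHP ↔ ∀ s ∈ H ⊔ P, χ s = 1 := fun χ => by
    rw [← SetLike.mem_coe, hAnnHP]; rfl
  have hKL : H ⊔ N ≤ H ⊔ P := sup_le_sup_left hNP H
  have hle : AnnHP ≤ AnnHN := fun χ hχ =>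
    (hmemN χ).mpr fun s hs => (hmemP χ).mp hχ s (hKL hs)
  -- Dedekind modular law: (H ⊔ N) ⊓ P = (H ⊓ P) ⊔ N  since N ≤ P
  have hDed : (H ⊔ N) ⊓ P = Q := by
    rw [hQdef, sup_comm H N, sup_comm (H ⊓ P) N]
    exact sup_inf_assoc_of_le H hNP
  have hQK : Q ≤ H ⊔ N := sup_le (inf_le_left.trans le_sup_left) le_sup_right
  -- the restriction-and-lift homomorphism
  have hres : ∀ χ : ↥AnnHN, ∀ x ∈ Q.subgroupOf P, (χ : G →* ℂˣ).domRestrict P x = 1 := by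
    intro χ x hx
    exact (hmemN _).mp χ.2 x (hQK (Subgroup.mem_subgroupOf.mp hx))
  let Φ : ↥AnnHN →* ((↥P ⧸ Q.subgroupOf P) →* ℂˣ) :=
  { toFun := fun χ =>
      QuotientGroup.lift (Q.subgroupOf P) ((χ : G →* ℂˣ).domRestrict P) (hres χ)
    map_one' := by
      ext x
      simp
    map_mul' := fun χ₁ χ₂ => by
      ext x
      simp
      rfl }
  -- the kernel of Φ is the annihilator of H ⊔ P
  have hker : Φ.ker = AnnHP.subgroupOf AnnHN := by
    ext χ
    simp only [MonoidHom.mem_ker, Subgroup.mem_subgroupOf]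
    constructor
    · intro h
      refine (hmemP _).mpr fun s hs => ?_
      have hP : ∀ p ∈ P, (χ : G →* ℂˣ) p = 1 := by
        intro p hp
        have := congrArg (fun f => f (QuotientGroup.mk (⟨p, hp⟩ : P))) h
        exact this
      have hsub : H ⊔ P ≤ MonoidHom.ker (χ : G →* ℂˣ) := by
        refine sup_le (fun a ha => ?_) (fun a ha => ?_)
        · exact (hmemN _).mp χ.2 a ((le_sup_left : H ≤ H ⊔ N) ha)
        · exact hP a ha
      exact hsub hs
    · intro h
      ext x
      exact congrArg Units.val ((hmemP _).mp h x ((le_sup_right : P ≤ H ⊔ P) x.2))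
  -- finiteness
  haveI : Finite ((G ⧸ (H ⊔ N)) →* ℂˣ) := aux_char_finite _
  haveI : Finite ((G ⧸ (H ⊔ P)) →* ℂˣ) := aux_char_finite _
  haveI : Finite ((↥P ⧸ Q.subgroupOf P) →* ℂˣ) := aux_char_finite _
  haveI : Finite ↥AnnHN := Finite.of_equiv _ (auxAnnEquiv (H ⊔ N) AnnHN hmemN)
  haveI : Finite ↥AnnHP := Finite.of_equiv _ (auxAnnEquiv (H ⊔ P) AnnHP hmemP)
  -- cardinalities
  have c1 : Nat.card ↥AnnHN = (H ⊔ N).index := by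
    rw [← Nat.card_congr (auxAnnEquiv (H ⊔ N) AnnHN hmemN), aux_char_card,
      Subgroup.index_eq_card]
  have c2 : Nat.card ↥AnnHP = (H ⊔ P).index := by
    rw [← Nat.card_congr (auxAnnEquiv (H ⊔ P) AnnHP hmemP), aux_char_card,
      Subgroup.index_eq_card]
  have hsubQ : Q.subgroupOf P = (H ⊔ N).subgroupOf P := by
    ext x
    simp only [Subgroup.mem_subgroupOf, ← hDed, Subgroup.mem_inf]
    exact ⟨fun h => h.1, fun h => ⟨h, x.2⟩⟩
  have hPsup : P ⊔ (H ⊔ N) = H ⊔ P := by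
    apply le_antisymm
    · exact sup_le le_sup_right (sup_le le_sup_left (hNP.trans le_sup_right))
    · exact sup_le (le_sup_left.trans le_sup_right) le_sup_left
  have cD : Nat.card ((↥P ⧸ Q.subgroupOf P) →* ℂˣ) = (H ⊔ N).relIndex (H ⊔ P) := by
    rw [aux_char_card, ← Subgroup.index_eq_card, hsubQ]
    have := Subgroup.relIndex_sup_right P (H ⊔ N)
    rw [hPsup] at this
    exact this.symm
  -- card of the quotient equals card of the target character group
  have key : Nat.card (↥AnnHN ⧸ AnnHP.subgroupOf AnnHN) =
      Nat.card ((↥P ⧸ Q.subgroupOf P) →* ℂˣ) := by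
    have h1 : Nat.card ↥AnnHN =
        Nat.card (↥AnnHN ⧸ AnnHP.subgroupOf AnnHN) * Nat.card ↥(AnnHP.subgroupOf AnnHN) :=
      Subgroup.card_eq_card_quotient_mul_card_subgroup _
    have h2 : Nat.card ↥(AnnHP.subgroupOf AnnHN) = Nat.card ↥AnnHP :=
      Nat.card_congr (Subgroup.subgroupOfEquivOfLe hle).toEquiv
    have h3 : (H ⊔ N).relIndex (H ⊔ P) * (H ⊔ P).index = (H ⊔ N).index :=
      Subgroup.relIndex_mul_index hKL
    have h4 : Nat.card (↥AnnHN ⧸ AnnHP.subgroupOf AnnHN) * Nat.card ↥AnnHP =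
        Nat.card ((↥P ⧸ Q.subgroupOf P) →* ℂˣ) * Nat.card ↥AnnHP := by
      rw [← h2, ← h1, c1, cD, h2, c2, h3]
    have hpos : 0 < Nat.card ↥AnnHP := Nat.card_pos
    exact Nat.eq_of_mul_eq_mul_right hpos h4
  -- build the isomorphism
  refine ⟨hle, ?_, ?_⟩
  · let e0 : (↥AnnHN ⧸ AnnHP.subgroupOf AnnHN) ≃* (↥AnnHN ⧸ Φ.ker) :=
      QuotientGroup.quotientMulEquivOfEq hker.symm
    let f : (↥AnnHN ⧸ AnnHP.subgroupOf AnnHN) →* ((↥P ⧸ Q.subgroupOf P) →* ℂˣ) :=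
      (QuotientGroup.kerLift Φ).comp e0.toMonoidHom
    have hinj : Function.Injective f :=
      (QuotientGroup.kerLift_injective Φ).comp e0.injective
    have hbij : Function.Bijective f :=
      (Nat.bijective_iff_injective_and_card f).mpr ⟨hinj, key⟩
    exact ⟨MulEquiv.ofBijective f hbij⟩
  · rw [key, aux_char_card, Subgroup.index_eq_card]
end
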